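/- For every l ≥ 1, the family { ρ̃₀(U) : U ∈ Y_l \ {[(z,…,z)]} } (where (z,…,z) is the all-z tuple of length l) is ℚ-linearly independent in H. -/

import Mathlib

noncomputable section

open Finset

/-- Hoffman's algebra `H = ℚ⟨x,y⟩`, the noncommutative polynomial algebra
over `ℚ` in two indeterminates. -/
abbrev H : Type := FreeAlgebra ℚ (Fin 2)

/-- The indeterminate `x`. -/
def Hx : H := FreeAlgebra.ι ℚ 0

/-- The indeterminate `y`. -/
def Hy : H := FreeAlgebra.ι ℚ 1

/-- `z = x + y`. -/
def Hz : H := Hx + Hy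

/-- `z_k = x^(k-1) y`. -/
def zw (k : ℕ) : H := Hx ^ (k - 1) * Hy

/-- The monomial `z_{k 0} z_{k 1} ⋯ z_{k (l-1)}`. -/
def zwords {l : ℕ} (k : Fin l → ℕ) : H := (List.ofFn fun i => zw (k i)).prod

/-- The monomial `z_{k a} z_{k (a+1)} ⋯ z_{k (a+l-1)}`. -/
def zseq (k : ℕ → ℕ) (a l : ℕ) : H := ((List.range l).map fun t => zw (k (a + t))).prod

/-- `Ȟ¹`: the ℚ-span of the monomials `z_{k₁}⋯z_{k_l}` over tuples of positive
integers not all equal to 1. -/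
def Hcheck : Submodule ℚ H :=
  Submodule.span ℚ
    {w | ∃ (l : ℕ) (k : Fin (l + 1) → ℕ), (∀ i, 1 ≤ k i) ∧ (∃ i, k i ≠ 1) ∧ w = zwords k}

/-- `Ȟ¹_d`: the subspace of `Ȟ¹` spanned by the monomials of total degree `d`. -/
def HcheckDeg (d : ℕ) : Submodule ℚ H :=
  Submodule.span ℚ
    {w | ∃ (l : ℕ) (k : Fin (l + 1) → ℕ),
      (∀ i, 1 ≤ k i) ∧ (∃ i, k i ≠ 1) ∧ (∑ i, k i) = d ∧ w = zwords k}

/-- `H⁰_d`: the span of the monomials `z_{k₁}⋯z_{k_l}` of total degree `d` with `k₁ ≥ 2`. -/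
def H0Deg (d : ℕ) : Submodule ℚ H :=
  Submodule.span ℚ
    {w | ∃ (l : ℕ) (k : Fin (l + 1) → ℕ),
      (∀ i, 1 ≤ k i) ∧ 2 ≤ k 0 ∧ (∑ i, k i) = d ∧ w = zwords k}

/-- The multiplication map `M_n : H^{⊗(n+2)} → H`. -/
def Mn (n : ℕ) : TensorPower ℚ (n + 2) H →ₗ[ℚ] H :=
  PiTensorProduct.lift (MultilinearMap.mkPiAlgebraFin ℚ (n + 2) H)

/-- The `H`-bimodule action `a ◇ t ◇ b` on `H^{⊗(n+2)}`:
`a ◇ (w₁⊗⋯⊗w_{n+2}) ◇ b = w₁b ⊗ w₂ ⊗ ⋯ ⊗ w_{n+1} ⊗ a w_{n+2}`. -/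
def dia (n : ℕ) (a : H) (t : TensorPower ℚ (n + 2) H) (b : H) : TensorPower ℚ (n + 2) H :=
  PiTensorProduct.map
    (fun i => if i = 0 then LinearMap.mulRight ℚ b
      else if i = Fin.last (n + 1) then LinearMap.mulLeft ℚ a
      else LinearMap.id) t

/-- The pure tensor `x ⊗ z^{⊗n} ⊗ y ∈ H^{⊗(n+2)}`. -/
def xzy (n : ℕ) : TensorPower ℚ (n + 2) H :=
  PiTensorProduct.tprod ℚ
    (fun i : Fin (n + 2) => if i = 0 then Hx else if i = Fin.last (n + 1) then Hy else Hz)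

/-- The pure tensor `x ⊗ y^{⊗(n+1)} ∈ H^{⊗(n+2)}`. -/
def xyy (n : ℕ) : TensorPower ℚ (n + 2) H :=
  PiTensorProduct.tprod ℚ (fun i : Fin (n + 2) => if i = 0 then Hx else Hy)

/-- The defining properties of the family of maps `C_n : H → H^{⊗(n+2)}`. -/
def IsC (C : ∀ n : ℕ, H →ₗ[ℚ] TensorPower ℚ (n + 2) H) : Prop :=
  ∀ n, C n 1 = 0 ∧ C n Hx = xzy n ∧ C n Hy = -xzy n ∧
    ∀ w w' : H, C n (w * w') = dia n 1 (C n w) w' + dia n w (C n w') 1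

/-- `γ`: the algebra endomorphism of `H` with `γ(x) = x`, `γ(y) = x + y`
(it is an automorphism). -/
def gam : H →ₐ[ℚ] H := FreeAlgebra.lift ℚ ![Hx, Hz]

/-- `γ⁻¹`: the inverse automorphism of `γ`, having `γ⁻¹(x) = x`, `γ⁻¹(y) = y - x`. -/
def gamInv : H →ₐ[ℚ] H := FreeAlgebra.lift ℚ ![Hx, Hy - Hx]

/-- The defining properties of the family of maps `C̄_n : H → H^{⊗(n+2)}`. -/
def IsCbar (C : ∀ n : ℕ, H →ₗ[ℚ] TensorPower ℚ (n + 2) H) : Prop :=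
  ∀ n, C n 1 = 0 ∧ C n Hx = xyy n ∧ C n Hy = -xyy n ∧
    ∀ w w' : H, C n (w * w') = dia n 1 (C n w) (gamInv w') + dia n (gamInv w) (C n w') 1

/-- The value of `ρ` on the monomial `z_{k 0} ⋯ z_{k (l-1)}` (for `k` periodic of
period `l`):
`∑_{j<l} ∑_{i=1}^{k_j−1} z_{k_j−i+1} z_{k_{j+1}} ⋯ z_{k_{j+l−1}} z_i
  − ∑_{j<l} z_{k_j+1} z_{k_{j+1}} ⋯ z_{k_{j+l−1}}`. -/
def rhoFormula (k : ℕ → ℕ) (l : ℕ) : H :=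
  (∑ j ∈ Finset.range l, ∑ i ∈ Finset.Icc 1 (k j - 1),
      zw (k j - i + 1) * zseq k (j + 1) (l - 1) * zw i) -
    ∑ j ∈ Finset.range l, zw (k j + 1) * zseq k (j + 1) (l - 1)

/-- The defining property of the ℚ-linear map `ρ` on `Ȟ¹`: its values on the
monomials `z_{k₁}⋯z_{k_l}` (positive indices, not all 1). -/
def IsRho (rho : H →ₗ[ℚ] H) : Prop :=
  ∀ (l : ℕ) (k : ℕ → ℕ), 1 ≤ l → (∀ j, k (j + l) = k j) → (∀ j, 1 ≤ k j) →
    (∃ j, k j ≠ 1) → rho (zseq k 0 l) = rhoFormula k l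

/-- The defining property of the map `d` on `ℚ + Hy`: `d(1) = 1`, `d(wy) = γ(w)y`. -/
def IsD (dm : H →ₗ[ℚ] H) : Prop := dm 1 = 1 ∧ ∀ w : H, dm (w * Hy) = gam w * Hy

/-- The `n`-step Lucas numbers `L^n_m`: `L^n_m = 2^m − 1` for `m ≤ n`,
`L^n_m = L^n_{m−1} + ⋯ + L^n_{m−n}` for `m ≥ n+1`, and `L^0_m = 0`. -/
def Lucas (n : ℕ) (m : ℕ) : ℕ :=
  if _hn : n = 0 then 0
  else if _hm : m ≤ n then 2 ^ m - 1
  else ∑ i ∈ (Finset.Icc 1 n).attach, Lucas n (m - i.1)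
termination_by m
decreasing_by
  have h1 := (Finset.mem_Icc.mp i.2).1
  omega

/-- The multiple zeta value `ζ(k₁,…,k_l) = ∑_{n₁ > ⋯ > n_l ≥ 1} 1/(n₁^{k₁}⋯n_l^{k_l})`. -/
def mzeta {l : ℕ} (k : Fin l → ℕ) : ℝ :=
  ∑' n : {n : Fin l → ℕ // StrictAnti n ∧ ∀ i, 0 < n i}, ∏ i, ((n.1 i : ℝ) ^ k i)⁻¹

/-- The multiple zeta-star value
`ζ*(k₁,…,k_l) = ∑_{n₁ ≥ ⋯ ≥ n_l ≥ 1} 1/(n₁^{k₁}⋯n_l^{k_l})`. -/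
def mzetaStar {l : ℕ} (k : Fin l → ℕ) : ℝ :=
  ∑' n : {n : Fin l → ℕ // Antitone n ∧ ∀ i, 0 < n i}, ∏ i, ((n.1 i : ℝ) ^ k i)⁻¹

/-- The defining property of the map `Z : H⁰ → ℝ`. -/
def IsZ (Z : H →ₗ[ℚ] ℝ) : Prop :=
  Z 1 = 1 ∧ ∀ (l : ℕ) (k : Fin (l + 1) → ℕ), (∀ i, 1 ≤ k i) → 2 ≤ k 0 →
    Z (zwords k) = mzeta k

/-- The defining property of the map `Z̄ : H⁰ → ℝ`. -/
def IsZbar (Z : H →ₗ[ℚ] ℝ) : Prop :=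
  Z 1 = 1 ∧ ∀ (l : ℕ) (k : Fin (l + 1) → ℕ), (∀ i, 1 ≤ k i) → 2 ≤ k 0 →
    Z (zwords k) = mzetaStar k

/-- The defining property of the map `α : Hy → Hy`, dividing each monomial by
its depth. -/
def IsAlpha (am : H →ₗ[ℚ] H) : Prop :=
  ∀ (l : ℕ) (k : Fin (l + 1) → ℕ), (∀ i, 1 ≤ k i) →
    am (zwords k) = ((l : ℚ) + 1)⁻¹ • zwords k

/-- Cyclic equivalence on tuples: `v` is a cyclic shift of `u`.  Here `Fin 2`
encodes the two symbols: `0 = y`, `1 = z`. -/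
def cycRel (l : ℕ) (u v : Fin l → Fin 2) : Prop := ∃ j : Fin l, ∀ t, v t = u (t + j)

/-- `X_{l,n}`: tuples in `{y,z}^l` containing at least `n` cyclically consecutive `z`'s
(i.e. some cyclic shift begins with `z^n`).  `0 = y`, `1 = z`. -/
def Xln (l n : ℕ) : Set (Fin l → Fin 2) :=
  {u | ∃ j : Fin l, ∀ t : Fin l, (t : ℕ) < n → u (t + j) = 1}

/-- `Y_{l,n} = X_{l,n}/∼`, the set of cyclic equivalence classes in `X_{l,n}`. -/
def Yln (l n : ℕ) : Type := Quot (fun u v : Xln l n => cycRel l u.1 v.1)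

/-- The letters `y`, `z` of `{y,z}`-tuples, as elements of `H`: `0 ↦ y`, `1 ↦ z`. -/
def yz : Fin 2 → H := ![Hy, Hz]

/-- The product `u₁⋯u_l ∈ H` of a `{y,z}`-tuple. -/
def wprod {l : ℕ} (u : Fin l → Fin 2) : H := (List.ofFn fun t => yz (u t)).prod


/-! ### Auxiliary development for the proof -/

section RhoAux

/-- Product of a word over the `{y,z}` alphabet given as a list. -/
def wlist (L : List (Fin 2)) : H := (L.map yz).prod

/-- Basis monomial of `H` given by a word in the letters `x = ι 0`, `y = ι 1`. -/
def mono (L : List (Fin 2)) : H := (L.map (FreeAlgebra.ι ℚ)).prod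

lemma mono_append (A B : List (Fin 2)) : mono (A ++ B) = mono A * mono B := by
  simp [mono, List.map_append, List.prod_append]

/-- The letter swap `0 ↔ 1`. -/
def sw : Fin 2 → Fin 2 := ![1, 0]

/-- Indicator of the letter `y` (encoded as `0`). -/
def cc : Fin 2 → ℚ := ![1, 0]

/-- The algebra endomorphism `x ↦ x - y`, `y ↦ y` (sends `z ↦ x`). -/
def theta : H →ₐ[ℚ] H := FreeAlgebra.lift ℚ ![Hx - Hy, Hy]

lemma theta_yz (a : Fin 2) : theta (yz a) = FreeAlgebra.ι ℚ (sw a) := by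
  fin_cases a <;>
    simp [yz, sw, Hz, theta, Hx, Hy, map_add, FreeAlgebra.lift_ι_apply]

lemma theta_x : theta Hx = mono [0] - mono [1] := by
  simp [theta, Hx, FreeAlgebra.lift_ι_apply, mono, Hy]

lemma theta_y : theta Hy = mono [1] := by
  simp [theta, Hy, FreeAlgebra.lift_ι_apply, mono]

lemma theta_wlist (L : List (Fin 2)) : theta (wlist L) = mono (L.map sw) := by
  induction L with
  | nil => simp [wlist, mono]
  | cons a L ih =>
    have : wlist (a :: L) = yz a * wlist L := by simp [wlist]
    rw [this, map_mul, ih, theta_yz]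
    have : mono ((a :: L).map sw) = mono ([sw a] ++ L.map sw) := by simp
    rw [this, mono_append]
    simp [mono]

/-- `H` as the monoid algebra on the free monoid. -/
def EM : H ≃ₐ[ℚ] MonoidAlgebra ℚ (FreeMonoid (Fin 2)) :=
  FreeAlgebra.equivMonoidAlgebraFreeMonoid

lemma EM_ι (i : Fin 2) : EM (FreeAlgebra.ι ℚ i) = MonoidAlgebra.single (FreeMonoid.of i) 1 := by
  simp [EM, FreeAlgebra.equivMonoidAlgebraFreeMonoid, FreeAlgebra.lift_ι_apply,
    MonoidAlgebra.of_apply]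

lemma EM_mono (L : List (Fin 2)) : EM (mono L) = MonoidAlgebra.single (FreeMonoid.ofList L) 1 := by
  induction L with
  | nil => simp [mono]; rfl
  | cons a L ih =>
    have : mono (a :: L) = mono [a] * mono L := mono_append [a] L
    rw [this, map_mul, ih]
    have h1 : mono [a] = FreeAlgebra.ι ℚ a := by simp [mono]
    rw [h1, EM_ι, MonoidAlgebra.single_mul_single, one_mul]
    rfl

/-- Coefficient of a basis monomial, as a linear functional on `H`. -/
def coeffL (M : List (Fin 2)) : H →ₗ[ℚ] ℚ :=
  (Finsupp.lapply (FreeMonoid.ofList M)).comp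
    ((MonoidAlgebra.coeffLinearEquiv ℚ).toLinearMap.comp EM.toLinearMap)

open scoped Classical in
lemma coeff_mono (M M' : List (Fin 2)) :
    coeffL M (mono M') = if M' = M then 1 else 0 := by
  have h : coeffL M (mono M') = (EM (mono M')).coeff (FreeMonoid.ofList M) := rfl
  rw [h, EM_mono, MonoidAlgebra.coeff_single, Finsupp.single_apply]
  simp [FreeMonoid.ofList.injective.eq_iff]

lemma dia_smul (n : ℕ) (a b : H) (r : ℚ) (t : TensorPower ℚ (n + 2) H) :
    dia n a (r • t) b = r • dia n a t b := by
  simp [dia]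

lemma dia_sum (n : ℕ) (a b : H) {ι : Type*} (s : Finset ι) (f : ι → TensorPower ℚ (n + 2) H) :
    dia n a (∑ j ∈ s, f j) b = ∑ j ∈ s, dia n a (f j) b := by
  simp [dia]

lemma dia_dia (n : ℕ) (a a' b b' : H) (t : TensorPower ℚ (n + 2) H) :
    dia n a (dia n a' t b') b = dia n (a * a') t (b' * b) := by
  have hfun : (fun i : Fin (n + 2) =>
      (if i = 0 then LinearMap.mulRight ℚ b
        else if i = Fin.last (n + 1) then LinearMap.mulLeft ℚ a else LinearMap.id) ∘ₗ
      (if i = 0 then LinearMap.mulRight ℚ b'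
        else if i = Fin.last (n + 1) then LinearMap.mulLeft ℚ a' else LinearMap.id)) =
      (fun i : Fin (n + 2) => if i = 0 then LinearMap.mulRight ℚ (b' * b)
        else if i = Fin.last (n + 1) then LinearMap.mulLeft ℚ (a * a') else LinearMap.id) := by
    funext i
    by_cases h0 : i = 0
    · subst h0
      have hne : (0 : Fin (n + 2)) ≠ Fin.last (n + 1) := by
        simp [Fin.ext_iff]
      simp [hne, LinearMap.mulRight_mul]
    · by_cases hl : i = Fin.last (n + 1)
      · subst hl
        simp [h0, LinearMap.mulLeft_mul]
      · simp [h0, hl]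
  show (PiTensorProduct.map _) ((PiTensorProduct.map _) t) = (PiTensorProduct.map _) t
  rw [← LinearMap.comp_apply, ← PiTensorProduct.map_comp, hfun]

lemma Mn_dia_xzy (a b : H) : Mn 0 (dia 0 a (xzy 0) b) = Hx * b * (a * Hy) := by
  rw [dia, xzy, PiTensorProduct.map_tprod, Mn, PiTensorProduct.lift.tprod,
    MultilinearMap.mkPiAlgebraFin_apply]
  rw [List.ofFn_succ, List.ofFn_succ, List.ofFn_zero]
  have h1 : Fin.last (0 + 1) = (1 : Fin 2) := rfl
  simp [h1, Fin.succ]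

section CComp
variable (C : ∀ n : ℕ, H →ₗ[ℚ] TensorPower ℚ (n + 2) H) (hC : IsC C)
include hC

lemma C_z : C 0 Hz = 0 := by
  rw [Hz, map_add, (hC 0).2.1, (hC 0).2.2.1]; abel

lemma C_yz (a : Fin 2) : C 0 (yz a) = (-(cc a)) • xzy 0 := by
  fin_cases a
  · show C 0 Hy = _
    rw [(hC 0).2.2.1]; simp [cc]; exact (neg_one_smul ℚ _).symm
  · show C 0 Hz = _
    rw [C_z C hC]; simp [cc]

lemma Cwl (L : List (Fin 2)) : C 0 (wlist L) =
    ∑ j ∈ Finset.range L.length,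
      (-(cc (L.getD j 0))) • dia 0 (wlist (L.take j)) (xzy 0) (wlist (L.drop (j + 1))) := by
  induction L with
  | nil =>
    have : wlist [] = 1 := by simp [wlist]
    rw [this, (hC 0).1]; simp
  | cons d L ih =>
    have hw : wlist (d :: L) = yz d * wlist L := by simp [wlist]
    rw [hw, (hC 0).2.2.2, C_yz C hC, ih, dia_smul, dia_sum]
    simp only [List.length_cons]
    rw [Finset.sum_range_succ']
    conv_rhs => rw [add_comm]
    congr 1
    refine Finset.sum_congr rfl fun j _ => ?_
    rw [dia_smul, dia_dia]
    have h1 : (d :: L).getD (j + 1) 0 = L.getD j 0 := rfl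
    have h2 : (d :: L).take (j + 1) = d :: L.take j := rfl
    have h3 : (d :: L).drop (j + 1 + 1) = L.drop (j + 1) := rfl
    rw [h1, h2, h3]
    have h4 : wlist (d :: L.take j) = yz d * wlist (L.take j) := by simp [wlist]
    rw [h4, mul_one]

lemma rho_wlist (L : List (Fin 2)) : Mn 0 (C 0 (wlist L)) =
    ∑ j ∈ Finset.range L.length,
      (-(cc (L.getD j 0))) • (Hx * wlist (L.drop (j + 1)) * (wlist (L.take j) * Hy)) := by
  rw [Cwl C hC, map_sum]
  refine Finset.sum_congr rfl fun j _ => ?_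
  rw [map_smul, Mn_dia_xzy]

end CComp

open Fin.NatCast in
lemma rotate_ofFn' {α : Type*} {l : ℕ} [NeZero l] (u : Fin l → α) (r : ℕ) :
    (List.ofFn u).rotate r = List.ofFn (fun t => u (t + (r : Fin l))) := by
  apply List.ext_get
  · simp
  · intro n h1 h2
    rw [List.get_rotate]
    simp only [List.get_ofFn]
    congr 1
    apply Fin.ext
    simp [Fin.add_def, Fin.val_natCast, Nat.add_mod_mod]

lemma getD_ofFn {α : Type*} {l : ℕ} (u : Fin l → α) (j : ℕ) (hj : j < l) (d : α) :
    (List.ofFn u).getD j d = u ⟨j, hj⟩ := by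
  rw [List.getD_eq_getElem _ _ (by simpa using hj)]
  simp

lemma drop_take_rotate {l : ℕ} (u : Fin l → Fin 2) (j : ℕ) (hj : j < l) (hy : u ⟨j, hj⟩ = 0) :
    (List.ofFn u).drop (j + 1) ++ ((List.ofFn u).take j ++ [0]) =
      (List.ofFn u).rotate (j + 1) := by
  have hlen : (List.ofFn u).length = l := by simp
  have h0 : ([0] : List (Fin 2)) = [(List.ofFn u)[j]'(by simpa [hlen] using hj)] := by
    simp [hy]
  rw [h0, List.take_concat_get' _ _ (by simpa [hlen] using hj)]
  rw [List.rotate_eq_drop_append_take (by omega : j + 1 ≤ (List.ofFn u).length)]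

open Fin.NatCast in
lemma cyc_of_rotate_eq {l : ℕ} [NeZero l] (u u' : Fin l → Fin 2) (r r' : ℕ)
    (h : (List.ofFn u').rotate r' = (List.ofFn u).rotate r) : cycRel l u u' := by
  rw [rotate_ofFn', rotate_ofFn'] at h
  have hfun := List.ofFn_inj.mp h
  refine ⟨(r : Fin l) - (r' : Fin l), fun t => ?_⟩
  have := congrFun hfun (t - (r' : Fin l))
  rw [sub_add_cancel] at this
  rw [this]
  congr 1
  abel

lemma sw_map_injective : Function.Injective (List.map sw) := by
  apply List.map_injective_iff.mpr
  intro a b hab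
  fin_cases a <;> fin_cases b <;> simp_all [sw]

lemma coeff_term (V D T : List (Fin 2)) (r : ℚ) :
    coeffL (0 :: V.map sw) (theta (r • (Hx * wlist D * (wlist T * Hy)))) =
      r * (if D ++ (T ++ [0]) = V then 1 else 0) := by
  rw [map_smul, map_smul, smul_eq_mul]
  congr 1
  rw [map_mul theta (Hx * wlist D) (wlist T * Hy), map_mul theta Hx (wlist D),
    map_mul theta (wlist T) Hy, theta_x, theta_y, theta_wlist, theta_wlist]
  rw [sub_mul, sub_mul, map_sub]
  have e0 : mono [(0 : Fin 2)] * mono (D.map sw) * (mono (T.map sw) * mono [1]) =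
      mono (([0] ++ D.map sw) ++ (T.map sw ++ [1])) := by
    rw [mono_append, mono_append, mono_append]
  have e1 : mono [(1 : Fin 2)] * mono (D.map sw) * (mono (T.map sw) * mono [1]) =
      mono (([1] ++ D.map sw) ++ (T.map sw ++ [1])) := by
    rw [mono_append, mono_append, mono_append]
  rw [e0, e1, coeff_mono, coeff_mono]
  have hmap : (D.map sw) ++ (T.map sw ++ [1]) = (D ++ (T ++ [0])).map sw := by
    simp [sw]
  have h2 : (([1] ++ D.map sw) ++ (T.map sw ++ [1]) = 0 :: V.map sw) = False := by
    simp
  simp only [h2, if_false, sub_zero]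
  have h1 : (([0] ++ D.map sw) ++ (T.map sw ++ [1]) = 0 :: V.map sw) =
      (D ++ (T ++ [0]) = V) := by
    have : ([0] ++ D.map sw) ++ (T.map sw ++ [1]) = 0 :: ((D ++ (T ++ [0])).map sw) := by
      rw [← hmap]; simp
    rw [this]
    simp only [List.cons.injEq, true_and]
    exact propext ⟨fun h => sw_map_injective h, fun h => by rw [h]⟩
  simp only [h1]

lemma coeff_rho (C : ∀ n : ℕ, H →ₗ[ℚ] TensorPower ℚ (n + 2) H) (hC : IsC C)
    (V L : List (Fin 2)) :
    coeffL (0 :: V.map sw) (theta (Mn 0 (C 0 (wlist L)))) =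
      ∑ j ∈ Finset.range L.length,
        (-(cc (L.getD j 0))) * (if L.drop (j + 1) ++ (L.take j ++ [0]) = V then 1 else 0) := by
  rw [rho_wlist C hC, map_sum theta, map_sum]
  refine Finset.sum_congr rfl fun j _ => ?_
  exact coeff_term V (L.drop (j + 1)) (L.take j) _

lemma fin2_eq_one {a : Fin 2} (h : a ≠ 0) : a = 1 := by
  fin_cases a
  · exact absurd rfl h
  · rfl

lemma cc_nonneg (a : Fin 2) : 0 ≤ cc a := by
  fin_cases a <;> simp [cc]

end RhoAux

/-- The family `{ρ̃₀(U) : U ∈ Y_l \ {[(z,…,z)]}}` is ℚ-linearly independent in `H`.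
Here `Y_l = Quot (cycRel l)` is the set of cyclic equivalence classes of
`{y,z}^l` (`0 ↦ y`, `1 ↦ z`), the all-`z` class is `[(1,…,1)]`, and
`ρ̃₀(U) = ρ₀(u₁⋯u_l)` for any representative `(u₁,…,u_l)` of `U`. -/
theorem rho0_classes_linearIndependent (l : ℕ) (hl : 1 ≤ l)
    (C : ∀ n : ℕ, H →ₗ[ℚ] TensorPower ℚ (n + 2) H) (hC : IsC C) :
    LinearIndependent ℚ
      (fun U : {U : Quot (cycRel l) // U ≠ Quot.mk (cycRel l) (fun _ => 1)} =>
        Mn 0 (C 0 (wprod (Quot.out U.1)))) := by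
  haveI : NeZero l := ⟨by omega⟩
  have hwp : ∀ (v : Fin l → Fin 2), wprod v = wlist (List.ofFn v) := by
    intro v
    simp only [wprod, wlist, List.map_ofFn]
    rfl
  rw [linearIndependent_iff']
  intro s g hsum i hi
  set u : Fin l → Fin 2 := Quot.out i.1 with hu
  obtain ⟨j₀, hj₀⟩ : ∃ j : Fin l, u j = 0 := by
    by_contra hcon
    push_neg at hcon
    apply i.2
    rw [← Quot.out_eq i.1]
    congr 1
    funext t
    exact fin2_eq_one (hcon t)
  set V : List (Fin 2) := (List.ofFn u).rotate ((j₀ : ℕ) + 1) with hV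
  set φ : H →ₗ[ℚ] ℚ := (coeffL (0 :: V.map sw)).comp theta.toLinearMap with hφ
  have heval : ∀ (U : {U : Quot (cycRel l) // U ≠ Quot.mk (cycRel l) (fun _ => 1)}),
      φ (Mn 0 (C 0 (wprod (Quot.out U.1)))) =
      ∑ j ∈ Finset.range l,
        (-(cc ((List.ofFn (Quot.out U.1)).getD j 0))) *
          (if (List.ofFn (Quot.out U.1)).drop (j + 1) ++
              ((List.ofFn (Quot.out U.1)).take j ++ [0]) = V then 1 else 0) := by
    intro U
    have h := coeff_rho C hC V (List.ofFn (Quot.out U.1))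
    rw [List.length_ofFn] at h
    rw [hwp (Quot.out U.1)]
    exact h
  have hoff : ∀ U, U ≠ i → φ (Mn 0 (C 0 (wprod (Quot.out U.1)))) = 0 := by
    intro U hUi
    rw [heval U]
    refine Finset.sum_eq_zero fun j hj => ?_
    have hjl : j < l := Finset.mem_range.mp hj
    set u' : Fin l → Fin 2 := Quot.out U.1 with hu'
    by_cases hy : u' ⟨j, hjl⟩ = 0
    · by_cases hrot : (List.ofFn u').drop (j + 1) ++ ((List.ofFn u').take j ++ [0]) = V
      · exfalso
        rw [drop_take_rotate u' j hjl hy] at hrot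
        have hcyc : cycRel l u u' :=
          cyc_of_rotate_eq u u' ((j₀ : ℕ) + 1) (j + 1) (by rw [hrot, hV])
        apply hUi
        have hq : Quot.mk (cycRel l) u = Quot.mk (cycRel l) u' := Quot.sound hcyc
        have h1 : i.1 = U.1 := by
          rw [← Quot.out_eq i.1, ← Quot.out_eq U.1, ← hu, ← hu', hq]
        exact Subtype.ext h1.symm
      · simp [hrot]
    · have hg : (List.ofFn u').getD j 0 = u' ⟨j, hjl⟩ := getD_ofFn u' j hjl 0
      rw [hg, fin2_eq_one hy]
      simp [cc]
  have hdiag : φ (Mn 0 (C 0 (wprod (Quot.out i.1)))) ≠ 0 := by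
    rw [heval i]
    simp only [neg_mul]
    rw [Finset.sum_neg_distrib]
    rw [neg_ne_zero]
    have hterm : ∀ j ∈ Finset.range l, (0:ℚ) ≤
        cc ((List.ofFn u).getD j 0) *
          (if (List.ofFn u).drop (j + 1) ++ ((List.ofFn u).take j ++ [0]) = V
            then 1 else 0) := by
      intro j _
      refine mul_nonneg (cc_nonneg _) ?_
      split <;> norm_num
    have hj0mem : (j₀ : ℕ) ∈ Finset.range l := Finset.mem_range.mpr j₀.isLt
    have hterm0 : cc ((List.ofFn u).getD (j₀ : ℕ) 0) *
        (if (List.ofFn u).drop ((j₀ : ℕ) + 1) ++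
            ((List.ofFn u).take (j₀ : ℕ) ++ [0]) = V then 1 else 0) = 1 := by
      have hg : (List.ofFn u).getD (j₀ : ℕ) 0 = u ⟨(j₀ : ℕ), j₀.isLt⟩ :=
        getD_ofFn u (j₀ : ℕ) j₀.isLt 0
      have hy0 : u ⟨(j₀ : ℕ), j₀.isLt⟩ = 0 := by
        simpa using hj₀
      have hcond : (List.ofFn u).drop ((j₀ : ℕ) + 1) ++
          ((List.ofFn u).take (j₀ : ℕ) ++ [0]) = V :=
        (drop_take_rotate u (j₀ : ℕ) j₀.isLt hy0).trans hV.symm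
      rw [hg, hy0, if_pos hcond]
      simp [cc]
    have hge : (1:ℚ) ≤ ∑ j ∈ Finset.range l,
        cc ((List.ofFn u).getD j 0) *
          (if (List.ofFn u).drop (j + 1) ++ ((List.ofFn u).take j ++ [0]) = V
            then 1 else 0) := by
      calc (1:ℚ) = _ := hterm0.symm
      _ ≤ _ := Finset.single_le_sum hterm hj0mem
    intro hzero
    rw [hzero] at hge
    norm_num at hge
  have h2 := congrArg φ hsum
  rw [map_sum, map_zero] at h2
  simp only [map_smul, smul_eq_mul] at h2
  rw [Finset.sum_eq_single_of_mem i hi (fun b _ hbi => by rw [hoff b hbi, mul_zero])] at h2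
  exact (mul_eq_zero.mp h2).resolve_right hdiag
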